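/- Let q be a real number with q > 1, let S ⊆ ℕ × ℤ be a finite set, and let c_{a,b} ∈ ℝ for each (a,b) ∈ S. Define f : ℕ → ℝ by f(n) = Σ_{(a,b)∈S} c_{a,b} · n^a · q^{b·n}. Then the family (f(n))_{n∈ℕ} is summable (equivalently, Σ_{n∈ℕ} |f(n)| < ∞) if and only if c_{a,b} = 0 for every (a,b) ∈ S with b ≥ 0. -/

import Mathlib

open Filter Topology

private lemma ratio_tendsto_aux (q : ℝ) (hq : 1 < q) {a A : ℕ} {b B : ℤ}
    (h : b < B ∨ (b = B ∧ a < A)) :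
    Tendsto (fun n : ℕ => ((n : ℝ) ^ a * q ^ (b * (n : ℤ))) /
      ((n : ℝ) ^ A * q ^ (B * (n : ℤ)))) atTop (nhds 0) := by
  have hq0 : (0 : ℝ) < q := lt_trans one_pos hq
  have hrw : ∀ n : ℕ, ((n : ℝ) ^ a * q ^ (b * (n : ℤ))) / ((n : ℝ) ^ A * q ^ (B * (n : ℤ)))
      = ((n : ℝ) ^ a / (n : ℝ) ^ A) * (q ^ (b - B)) ^ n := by
    intro n
    have hpow : (q ^ (b - B)) ^ n = q ^ (b * (n : ℤ)) / q ^ (B * (n : ℤ)) := by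
      rw [← zpow_natCast (q ^ (b - B)) n, ← zpow_mul, sub_mul, zpow_sub₀ (ne_of_gt hq0)]
    rw [hpow, div_mul_div_comm]
  rcases h with hb | ⟨rfl, ha⟩
  · -- geometric decay case
    set s : ℝ := q ^ (b - B) with hs
    have hs0 : 0 < s := zpow_pos hq0 _
    have hs1 : s < 1 := zpow_lt_one_of_neg₀ hq (by omega)
    apply squeeze_zero' (g := fun n : ℕ => (n : ℝ) ^ a * s ^ n)
    · filter_upwards [Filter.eventually_ge_atTop 1] with n hn
      rw [hrw n]
      positivity
    · filter_upwards [Filter.eventually_ge_atTop 1] with n hn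
      rw [hrw n]
      have h1 : (1 : ℝ) ≤ (n : ℝ) ^ A := one_le_pow₀ (by exact_mod_cast hn)
      have : (n : ℝ) ^ a / (n : ℝ) ^ A ≤ (n : ℝ) ^ a :=
        div_le_self (by positivity) h1
      exact mul_le_mul_of_nonneg_right this (by positivity)
    · exact tendsto_pow_const_mul_const_pow_of_lt_one a hs0.le hs1
  · -- polynomial decay case, b = B
    have hone : (q ^ (b - b)) = (1 : ℝ) := by simp
    have hlim : Tendsto (fun n : ℕ => ((n : ℝ) ^ (A - a))⁻¹) atTop (nhds 0) := by
      refine Tendsto.inv_tendsto_atTop ?_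
      exact (tendsto_pow_atTop (by omega)).comp tendsto_natCast_atTop_atTop
    refine hlim.congr' ?_
    filter_upwards [Filter.eventually_ge_atTop 1] with n hn
    rw [hrw n, hone, one_pow, mul_one]
    have hn0 : (n : ℝ) ≠ 0 := by positivity
    rw [eq_div_iff (by positivity), inv_mul_eq_div, div_eq_iff (by positivity),
      ← pow_add]
    congr 1
    omega

private lemma key_vanish (q : ℝ) (hq : 1 < q) (c : ℕ × ℤ → ℝ) :
    ∀ T : Finset (ℕ × ℤ), (∀ ab ∈ T, 0 ≤ ab.2) →
      Tendsto (fun n : ℕ => ∑ ab ∈ T, c ab * (n : ℝ) ^ ab.1 * q ^ (ab.2 * (n : ℤ)))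
        atTop (nhds 0) →
      ∀ ab ∈ T, c ab = 0 := by
  have hq0 : (0 : ℝ) < q := lt_trans one_pos hq
  intro T
  induction T using Finset.strongInduction with
  | _ T ih =>
    intro hpos htend ab hab
    obtain ⟨m, hm, hmax⟩ := T.exists_max_image (fun x => toLex (x.2, x.1)) ⟨ab, hab⟩
    set g : ℕ → ℝ := fun n => ∑ x ∈ T, c x * (n : ℝ) ^ x.1 * q ^ (x.2 * (n : ℤ)) with hg
    set D : ℕ → ℝ := fun n => (n : ℝ) ^ m.1 * q ^ (m.2 * (n : ℤ)) with hD
    -- the ratio tends to c m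
    have h1 : Tendsto (fun n => g n / D n) atTop (nhds (c m)) := by
      have hsum : ∀ n : ℕ, g n / D n =
          ∑ x ∈ T, (c x * (n : ℝ) ^ x.1 * q ^ (x.2 * (n : ℤ))) / D n := fun n =>
        Finset.sum_div T _ _
      have hlim : Tendsto (fun n : ℕ => ∑ x ∈ T,
          (c x * (n : ℝ) ^ x.1 * q ^ (x.2 * (n : ℤ))) / D n) atTop
          (nhds (∑ x ∈ T, if x = m then c x else 0)) := by
        refine tendsto_finset_sum _ (fun x hx => ?_)
        by_cases hxm : x = m
        · subst hxm
          simp only [if_pos rfl]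
          refine tendsto_const_nhds.congr' ?_
          filter_upwards [Filter.eventually_ge_atTop (1 : ℕ)] with n hn
          have hn1 : (1 : ℝ) ≤ (n : ℝ) := by exact_mod_cast hn
          have hDne : D n ≠ 0 := by
            have h1 : (0 : ℝ) < (n : ℝ) ^ x.1 := by positivity
            have h2 : (0 : ℝ) < q ^ (x.2 * (n : ℤ)) := zpow_pos hq0 _
            simp only [hD]
            positivity
          show c x = c x * (n : ℝ) ^ x.1 * q ^ (x.2 * (n : ℤ)) / D n
          rw [mul_assoc, mul_div_assoc, div_self hDne, mul_one]
        · simp only [if_neg hxm]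
          have hlt : toLex (x.2, x.1) < toLex (m.2, m.1) :=
            lt_of_le_of_ne (hmax x hx) (by
              intro hcontra
              apply hxm
              have := congrArg ofLex hcontra
              simp only [ofLex_toLex] at this
              exact Prod.ext (congrArg Prod.snd this) (congrArg Prod.fst this))
          rw [Prod.Lex.lt_iff] at hlt
          have hrat := ratio_tendsto_aux q hq (a := x.1) (A := m.1) (b := x.2) (B := m.2)
            (by rcases hlt with h | ⟨h1, h2⟩; exacts [Or.inl h, Or.inr ⟨h1, h2⟩])
          have := hrat.const_mul (c x)
          rw [mul_zero] at this
          refine this.congr (fun n => ?_)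
          simp only [hD]
          ring
      rw [Finset.sum_ite_eq' T m (fun x => c x), if_pos hm] at hlim
      exact hlim.congr (fun n => (hsum n).symm)
    -- the ratio tends to 0
    have h2 : Tendsto (fun n => g n / D n) atTop (nhds 0) := by
      have habs : Tendsto (fun n => |g n|) atTop (nhds 0) := by
        have := htend.abs
        rwa [abs_zero] at this
      refine squeeze_zero_norm' ?_ habs
      filter_upwards [Filter.eventually_ge_atTop 1] with n hn
      have hD1 : (1 : ℝ) ≤ D n := by
        have h1 : (1 : ℝ) ≤ (n : ℝ) ^ m.1 := one_le_pow₀ (by exact_mod_cast hn)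
        have h2 : (1 : ℝ) ≤ q ^ (m.2 * (n : ℤ)) :=
          one_le_zpow₀ hq.le (mul_nonneg (hpos m hm) (Int.natCast_nonneg n))
        calc (1 : ℝ) = 1 * 1 := by ring
        _ ≤ (n : ℝ) ^ m.1 * q ^ (m.2 * (n : ℤ)) := mul_le_mul h1 h2 one_pos.le (by positivity)
      rw [Real.norm_eq_abs, abs_div, abs_of_nonneg (le_trans zero_le_one hD1)]
      exact div_le_self (abs_nonneg _) hD1
    have hcm : c m = 0 := tendsto_nhds_unique h1 h2
    by_cases habm : ab = m
    · rw [habm]; exact hcm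
    · refine ih (T.erase m) (Finset.erase_ssubset hm)
        (fun x hx => hpos x (Finset.mem_of_mem_erase hx)) ?_ ab
        (Finset.mem_erase.2 ⟨habm, hab⟩)
      refine htend.congr (fun n => ?_)
      show (∑ x ∈ T, c x * (n : ℝ) ^ x.1 * q ^ (x.2 * (n : ℤ))) = _
      rw [← Finset.add_sum_erase T _ hm, hcm]
      ring

private lemma neg_summable (q : ℝ) (hq : 1 < q) (co : ℝ) (a : ℕ) {b : ℤ} (hb : b < 0) :
    Summable (fun n : ℕ => co * (n : ℝ) ^ a * q ^ (b * (n : ℤ))) := by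
  have hq0 : (0 : ℝ) < q := lt_trans one_pos hq
  have hr : ‖q ^ b‖ < 1 := by
    rw [Real.norm_eq_abs, abs_of_pos (zpow_pos hq0 _)]
    exact zpow_lt_one_of_neg₀ hq hb
  have := (summable_pow_mul_geometric_of_norm_lt_one a hr).mul_left co
  refine this.congr (fun n => ?_)
  rw [← zpow_natCast (q ^ b) n, ← zpow_mul]
  ring

/-- Real specialization of the corrected Proposition 4.2 in one variable:
`f(n) = ∑ (a,b) ∈ S, c (a,b) * n^a * q^(b*n)` is summable over `ℕ` if and only if the
coefficients of all the terms with `b ≥ 0` vanish. -/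
theorem stmt11 (q : ℝ) (hq : 1 < q) (S : Finset (ℕ × ℤ)) (c : ℕ × ℤ → ℝ) :
    Summable (fun n : ℕ =>
        ∑ ab ∈ S, c ab * (n : ℝ) ^ ab.1 * q ^ (ab.2 * (n : ℤ))) ↔
      ∀ ab ∈ S, 0 ≤ ab.2 → c ab = 0 := by
  constructor
  · intro hsum
    -- split into nonnegative and negative exponents
    set Sp := S.filter (fun ab => 0 ≤ ab.2) with hSp
    set Sm := S.filter (fun ab => ¬ 0 ≤ ab.2) with hSm
    have hsplit : ∀ n : ℕ,
        (∑ ab ∈ S, c ab * (n : ℝ) ^ ab.1 * q ^ (ab.2 * (n : ℤ))) =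
        (∑ ab ∈ Sp, c ab * (n : ℝ) ^ ab.1 * q ^ (ab.2 * (n : ℤ))) +
        (∑ ab ∈ Sm, c ab * (n : ℝ) ^ ab.1 * q ^ (ab.2 * (n : ℤ))) := fun n =>
      (Finset.sum_filter_add_sum_filter_not S _ _).symm
    have hmsum : Summable (fun n : ℕ =>
        ∑ ab ∈ Sm, c ab * (n : ℝ) ^ ab.1 * q ^ (ab.2 * (n : ℤ))) := by
      refine summable_sum (fun ab hab => ?_)
      exact neg_summable q hq (c ab) ab.1 (by
        have := (Finset.mem_filter.1 hab).2
        omega)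
    have htend0 : Tendsto (fun n : ℕ =>
        ∑ ab ∈ S, c ab * (n : ℝ) ^ ab.1 * q ^ (ab.2 * (n : ℤ))) atTop (nhds 0) :=
      hsum.tendsto_atTop_zero
    have htendm : Tendsto (fun n : ℕ =>
        ∑ ab ∈ Sm, c ab * (n : ℝ) ^ ab.1 * q ^ (ab.2 * (n : ℤ))) atTop (nhds 0) :=
      hmsum.tendsto_atTop_zero
    have htendp : Tendsto (fun n : ℕ =>
        ∑ ab ∈ Sp, c ab * (n : ℝ) ^ ab.1 * q ^ (ab.2 * (n : ℤ))) atTop (nhds 0) := by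
      have := htend0.sub htendm
      rw [sub_zero] at this
      refine this.congr (fun n => ?_)
      rw [hsplit n]
      ring
    have hvan := key_vanish q hq c Sp
      (fun ab hab => (Finset.mem_filter.1 hab).2) htendp
    intro ab hab hb
    exact hvan ab (Finset.mem_filter.2 ⟨hab, hb⟩)
  · intro h
    refine summable_sum (fun ab hab => ?_)
    by_cases hb : 0 ≤ ab.2
    · simpa [h ab hab hb] using summable_zero
    · exact neg_summable q hq (c ab) ab.1 (by omega)
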